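/- Let n ≥ 3 and let SB_n be the singular braid group, i.e., the group presented by generators σ_1, …, σ_{n−1}, τ_1, …, τ_{n−1} with relations σ_iσ_{i+1}σ_i = σ_{i+1}σ_iσ_{i+1} (1 ≤ i ≤ n−2), σ_iσ_j = σ_jσ_i, τ_iτ_j = τ_jτ_i, τ_iσ_j = σ_jτ_i (|i−j| ≥ 2), τ_iσ_i = σ_iτ_i (1 ≤ i ≤ n−1), σ_iσ_{i+1}τ_i = τ_{i+1}σ_iσ_{i+1} and σ_{i+1}σ_iτ_{i+1} = τ_iσ_{i+1}σ_i (1 ≤ i ≤ n−2). Let R = ℤ[t^{±1}] with t the Laurent variable, and for 1 ≤ i ≤ n−1 let S_i ∈ GL_n(R) be the matrix with (i,i+1)-entry t, (i+1,i)-entry 1, (k,k)-entry 1 for every k ∉ {i,i+1}, and all other entries 0. Then every group homomorphism φ : SB_n → GL_n(R) with φ(σ_i) = S_i for all 1 ≤ i ≤ n−1 is not injective. -/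

import Mathlib

open Matrix LaurentPolynomial

/-- The free-group generator corresponding to the braid generator `σ_i`
(0-indexed, `i : Fin (n-1)`). -/
def sbσ (n : ℕ) (i : Fin (n - 1)) : FreeGroup (Fin (n - 1) ⊕ Fin (n - 1)) :=
  FreeGroup.of (Sum.inl i)

/-- The free-group generator corresponding to the singular generator `τ_i`
(0-indexed, `i : Fin (n-1)`). -/
def sbτ (n : ℕ) (i : Fin (n - 1)) : FreeGroup (Fin (n - 1) ⊕ Fin (n - 1)) :=
  FreeGroup.of (Sum.inr i)

/-- The defining relators of the singular braid group `SB_n`: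
`σᵢσⱼσᵢ = σⱼσᵢσⱼ` for `j = i+1`; `σᵢσⱼ = σⱼσᵢ`, `τᵢτⱼ = τⱼτᵢ`, `τᵢσⱼ = σⱼτᵢ`
for `|i-j| ≥ 2`; `τᵢσᵢ = σᵢτᵢ`; and `σᵢσⱼτᵢ = τⱼσᵢσⱼ`, `σⱼσᵢτⱼ = τᵢσⱼσᵢ`
for `j = i+1`. -/
def sbRels (n : ℕ) : Set (FreeGroup (Fin (n - 1) ⊕ Fin (n - 1))) :=
  {r | (∃ i j : Fin (n - 1), (i : ℕ) + 1 = (j : ℕ) ∧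
          r = sbσ n i * sbσ n j * sbσ n i * (sbσ n j * sbσ n i * sbσ n j)⁻¹)
     ∨ (∃ i j : Fin (n - 1), ((i : ℕ) + 2 ≤ (j : ℕ) ∨ (j : ℕ) + 2 ≤ (i : ℕ)) ∧
          r = sbσ n i * sbσ n j * (sbσ n j * sbσ n i)⁻¹)
     ∨ (∃ i j : Fin (n - 1), ((i : ℕ) + 2 ≤ (j : ℕ) ∨ (j : ℕ) + 2 ≤ (i : ℕ)) ∧
          r = sbτ n i * sbτ n j * (sbτ n j * sbτ n i)⁻¹)
     ∨ (∃ i j : Fin (n - 1), ((i : ℕ) + 2 ≤ (j : ℕ) ∨ (j : ℕ) + 2 ≤ (i : ℕ)) ∧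
          r = sbτ n i * sbσ n j * (sbσ n j * sbτ n i)⁻¹)
     ∨ (∃ i : Fin (n - 1), r = sbτ n i * sbσ n i * (sbσ n i * sbτ n i)⁻¹)
     ∨ (∃ i j : Fin (n - 1), (i : ℕ) + 1 = (j : ℕ) ∧
          r = sbσ n i * sbσ n j * sbτ n i * (sbτ n j * sbσ n i * sbσ n j)⁻¹)
     ∨ (∃ i j : Fin (n - 1), (i : ℕ) + 1 = (j : ℕ) ∧
          r = sbσ n j * sbσ n i * sbτ n j * (sbτ n i * sbσ n j * sbσ n i)⁻¹)}

/-- The singular braid group `SB_n`, presented by generators `σ_i, τ_i`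
(`i : Fin (n-1)`, 0-indexed) and the relations `sbRels n`. -/
def SingularBraidGroup (n : ℕ) := PresentedGroup (sbRels n)

instance (n : ℕ) : Group (SingularBraidGroup n) :=
  inferInstanceAs (Group (PresentedGroup (sbRels n)))

/-- The image of the braid generator under the standard (Tong–Yang–Ma)
representation (0-indexed `i`): `(i,i+1)`-entry `t`, `(i+1,i)`-entry `1`,
diagonal entries `1` outside `{i, i+1}`, all other entries `0`. -/
def stdS (n : ℕ) {R : Type*} [CommRing R] (t : R) (i : ℕ) : Matrix (Fin n) (Fin n) R :=
  Matrix.of fun k l =>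
    if (k : ℕ) = i ∧ (l : ℕ) = i + 1 then t
    else if (k : ℕ) = i + 1 ∧ (l : ℕ) = i then 1
    else if k = l ∧ (k : ℕ) ≠ i ∧ (k : ℕ) ≠ i + 1 then 1
    else 0

namespace SBnAux

variable {n : ℕ}

lemma vmv_mul (a b c d : Fin n → ℤ) :
    vecMulVec a b * vecMulVec c d = (b ⬝ᵥ c) • vecMulVec a d := by
  ext i j
  simp only [Matrix.mul_apply, vecMulVec_apply, Matrix.smul_apply, smul_eq_mul, dotProduct,
    Finset.sum_mul]
  exact Finset.sum_congr rfl fun k _ => by ring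

def sing (p : Fin n) : Fin n → ℤ := Pi.single p 1

def uv (p q : Fin n) : Fin n → ℤ := -(sing p) - sing q
def rv (p q : Fin n) : Fin n → ℤ := sing p - sing q

def aa (p q : Fin n) : Matrix (Fin n) (Fin n) ℤ := vecMulVec (uv p q) (rv p q)

lemma dot (p q p' q' : Fin n) :
    (rv p q) ⬝ᵥ (uv p' q') =
      (if q = p' then 1 else 0) + (if q = q' then 1 else 0)
      - (if p = p' then 1 else 0) - (if p = q' then 1 else 0) := by
  simp [rv, uv, sing, sub_dotProduct, dotProduct_neg, dotProduct_sub, single_dotProduct,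
    Pi.single_apply, eq_comm]
  ring

lemma aa_mul_aa (p q p' q' : Fin n) :
    aa p q * aa p' q' =
      ((if q = p' then 1 else 0) + (if q = q' then 1 else 0)
        - (if p = p' then 1 else 0) - (if p = q' then (1:ℤ) else 0)) •
        vecMulVec (uv p q) (rv p' q') := by
  rw [aa, aa, vmv_mul, dot]

lemma aa_sq (p q : Fin n) (h : p ≠ q) : aa p q * aa p q = 0 := by
  rw [aa_mul_aa]; simp [h, h.symm]

lemma aa_disj (p q p' q' : Fin n) (h1 : p ≠ p') (h2 : p ≠ q') (h3 : q ≠ p') (h4 : q ≠ q') :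
    aa p q * aa p' q' = 0 := by
  rw [aa_mul_aa]; simp [h1, h2, h3, h4]

lemma aa_adj (p q s : Fin n) (h1 : p ≠ q) (h2 : p ≠ s) (h3 : q ≠ s) :
    aa p q * aa q s = vecMulVec (uv p q) (rv q s) := by
  rw [aa_mul_aa]; simp [h1, h2, h3, h1.symm]

lemma aa_adj' (p q s : Fin n) (h1 : p ≠ q) (h2 : p ≠ s) (h3 : q ≠ s) :
    aa q s * aa p q = -vecMulVec (uv q s) (rv p q) := by
  rw [aa_mul_aa]; simp [h1.symm, h2.symm, h3, h3.symm]

lemma aa_xyx (p q s : Fin n) (h1 : p ≠ q) (h2 : p ≠ s) (h3 : q ≠ s) :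
    aa p q * aa q s * aa p q = -(aa p q) := by
  rw [aa_adj p q s h1 h2 h3, aa, vmv_mul, dot]
  simp [h1, h1.symm, h2.symm, h3.symm, aa]

lemma aa_yxy (p q s : Fin n) (h1 : p ≠ q) (h2 : p ≠ s) (h3 : q ≠ s) :
    aa q s * aa p q * aa q s = -(aa q s) := by
  rw [aa_adj' p q s h1 h2 h3, neg_mul, aa, vmv_mul, dot]
  simp [h1, h1.symm, h2, h3, aa]

lemma braid_abs {R : Type*} [Ring R] (x y : R) (hx : x*x = 0) (hy : y*y = 0)
    (hxyx : x*y*x = -x) (hyxy : y*x*y = -y) :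
    (1-x)*(1-y)*(1-x) = (1-y)*(1-x)*(1-y) := by
  have h1 : (1-x)*(1-y)*(1-x) = 1 - y - 2*x + x*y + y*x + x*x - x*y*x := by noncomm_ring
  have h2 : (1-y)*(1-x)*(1-y) = 1 - x - 2*y + y*x + x*y + y*y - y*x*y := by noncomm_ring
  rw [h1, h2, hx, hy, hxyx, hyxy]
  noncomm_ring

lemma comm_abs {R : Type*} [Ring R] (x y : R) (hxy : x*y = 0) (hyx : y*x = 0) :
    (1-x)*(1-y) = (1-y)*(1-x) := by
  have h1 : (1-x)*(1-y) = 1 - x - y + x*y := by noncomm_ring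
  have h2 : (1-y)*(1-x) = 1 - x - y + y*x := by noncomm_ring
  rw [h1, h2, hxy, hyx]

/-- `fe i` and `fe1 i` : the Fin n versions of i, i+1 for i : Fin (n-1). -/
def fe (i : Fin (n-1)) : Fin n := ⟨i, by omega⟩
def fe1 (i : Fin (n-1)) : Fin n := ⟨(i:ℕ)+1, by omega⟩

/-- The Burau matrix (at t = -1) perturbation. -/
def AA (i : Fin (n-1)) : Matrix (Fin n) (Fin n) ℤ := aa (fe i) (fe1 i)

lemma fe_ne_fe1 (i : Fin (n-1)) : fe i ≠ fe1 i := by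
  simp [fe, fe1, Fin.ext_iff]

lemma AA_sq (i : Fin (n-1)) : AA i * AA i = 0 := aa_sq _ _ (fe_ne_fe1 i)

/-- Invertible unit 1 - AA i. -/
def MM (i : Fin (n-1)) : GL (Fin n) ℤ :=
  ⟨1 - AA i, 1 + AA i,
   by have h : (1 - AA i) * (1 + AA i) = 1 - AA i * AA i := by noncomm_ring
      rw [h, AA_sq, sub_zero],
   by have h : (1 + AA i) * (1 - AA i) = 1 - AA i * AA i := by noncomm_ring
      rw [h, AA_sq, sub_zero]⟩

lemma MM_val (i : Fin (n-1)) : ((MM i : GL (Fin n) ℤ) : Matrix (Fin n) (Fin n) ℤ) = 1 - AA i := rfl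

lemma MM_braid (i j : Fin (n-1)) (hij : (i:ℕ) + 1 = (j:ℕ)) :
    MM i * MM j * MM i = MM j * MM i * MM j := by
  have hq : fe j = fe1 i := by simp [fe, fe1, Fin.ext_iff, hij.symm]
  have h1 : fe i ≠ fe1 i := fe_ne_fe1 i
  have h2 : fe i ≠ fe1 j := by simp [fe, fe1, Fin.ext_iff]; omega
  have h3 : fe1 i ≠ fe1 j := by simp [fe, fe1, Fin.ext_iff]; omega
  apply Units.ext
  show (1 - AA i) * (1 - AA j) * (1 - AA i) = (1 - AA j) * (1 - AA i) * (1 - AA j)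
  have hAj : AA j = aa (fe1 i) (fe1 j) := by rw [AA, hq]
  refine braid_abs _ _ (AA_sq i) (AA_sq j) ?_ ?_
  · rw [hAj, AA]; exact aa_xyx _ _ _ h1 h2 h3
  · rw [hAj, AA]; exact aa_yxy _ _ _ h1 h2 h3

lemma MM_comm (i j : Fin (n-1)) (hij : (i:ℕ) + 2 ≤ (j:ℕ) ∨ (j:ℕ) + 2 ≤ (i:ℕ)) :
    MM i * MM j = MM j * MM i := by
  have h1 : fe i ≠ fe j := by simp [fe, Fin.ext_iff]; omega
  have h2 : fe i ≠ fe1 j := by simp [fe, fe1, Fin.ext_iff]; omega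
  have h3 : fe1 i ≠ fe j := by simp [fe, fe1, Fin.ext_iff]; omega
  have h4 : fe1 i ≠ fe1 j := by simp [fe, fe1, Fin.ext_iff]; omega
  apply Units.ext
  show (1 - AA i) * (1 - AA j) = (1 - AA j) * (1 - AA i)
  exact comm_abs _ _ (aa_disj _ _ _ _ h1 h2 h3 h4)
    (aa_disj _ _ _ _ h1.symm h3.symm h2.symm h4.symm)

end SBnAux

section StdS

variable {n : ℕ}

lemma stdS_sq {R : Type*} [CommRing R] (t : R) (i : ℕ) (hi : i + 1 < n) :
    stdS n t i * stdS n t i =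
      Matrix.diagonal (fun k : Fin n => if (k:ℕ) = i ∨ (k:ℕ) = i+1 then t else 1) := by
  ext k l
  rw [Matrix.mul_apply]
  by_cases hk : (k:ℕ) = i
  · rw [Finset.sum_eq_single (⟨i+1, hi⟩ : Fin n)]
    · simp only [stdS, Matrix.of_apply, Matrix.diagonal_apply, Fin.ext_iff, true_and, and_true,
        not_true, ne_eq, and_false, false_and, not_false_eq_true, eq_self_iff_true, if_true, if_false]
      split_ifs <;> first | (exfalso; omega) | rfl | ring1
    · intro b _ hb
      have hb' : (b:ℕ) ≠ i+1 := by simpa [Fin.ext_iff] using hb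
      have : stdS n t i k b = 0 := by
        simp only [stdS, Matrix.of_apply, Fin.ext_iff]
        split_ifs <;> first | (exfalso; omega) | rfl
      rw [this, zero_mul]
    · simp
  · by_cases hk' : (k:ℕ) = i + 1
    · rw [Finset.sum_eq_single (⟨i, by omega⟩ : Fin n)]
      · simp only [stdS, Matrix.of_apply, Matrix.diagonal_apply, Fin.ext_iff, true_and, and_true,
          not_true, ne_eq, and_false, false_and, not_false_eq_true, eq_self_iff_true, if_true, if_false]
        split_ifs <;> first | (exfalso; omega) | rfl | ring1
      · intro b _ hb
        have hb' : (b:ℕ) ≠ i := by simpa [Fin.ext_iff] using hb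
        have : stdS n t i k b = 0 := by
          simp only [stdS, Matrix.of_apply, Fin.ext_iff]
          split_ifs <;> first | (exfalso; omega) | rfl
        rw [this, zero_mul]
      · simp
    · rw [Finset.sum_eq_single k]
      · simp only [stdS, Matrix.of_apply, Matrix.diagonal_apply, Fin.ext_iff, true_and, and_true,
          not_true, ne_eq, and_false, false_and, not_false_eq_true, eq_self_iff_true, if_true, if_false]
        split_ifs <;> first | (exfalso; omega) | rfl | ring1
      · intro b _ hb
        have hb' : (b:ℕ) ≠ (k:ℕ) := by simpa [Fin.ext_iff, eq_comm] using hb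
        have : stdS n t i k b = 0 := by
          simp only [stdS, Matrix.of_apply, Fin.ext_iff]
          split_ifs <;> first | (exfalso; omega) | rfl
        rw [this, zero_mul]
      · simp

end StdS


/-- For `n ≥ 3`, every representation of the singular braid group `SB_n` into
`GL_n(ℤ[t^{±1}])` extending the standard representation of `B_n` is unfaithful. -/
theorem extension_standard_rep_SBn_unfaithful (n : ℕ) (hn : 3 ≤ n)
    (φ : SingularBraidGroup n →*
      GL (Fin n) (LaurentPolynomial ℤ))
    (hφ : ∀ i : Fin (n - 1),
      ((φ (PresentedGroup.of (Sum.inl i)) : GL (Fin n) (LaurentPolynomial ℤ)) :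
        Matrix (Fin n) (Fin n) (LaurentPolynomial ℤ)) = stdS n (T 1) (i : ℕ)) :
    ¬ Function.Injective φ := by
  intro hinj
  have h0 : (0:ℕ) < n - 1 := by omega
  have h1 : (1:ℕ) < n - 1 := by omega
  set i0 : Fin (n-1) := ⟨0, h0⟩ with hi0def
  set i1 : Fin (n-1) := ⟨1, h1⟩ with hi1def
  -- the element σ₀²σ₁² and σ₁²σ₀² have the same image under φ
  have hcomm : φ (PresentedGroup.of (Sum.inl i0) * PresentedGroup.of (Sum.inl i0) *
        (PresentedGroup.of (Sum.inl i1) * PresentedGroup.of (Sum.inl i1))) =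
      φ (PresentedGroup.of (Sum.inl i1) * PresentedGroup.of (Sum.inl i1) *
        (PresentedGroup.of (Sum.inl i0) * PresentedGroup.of (Sum.inl i0))) := by
    apply Units.ext
    repeat erw [_root_.map_mul]
    simp only [Units.val_mul, hφ i0, hφ i1]
    rw [stdS_sq (T 1) 0 (by omega), stdS_sq (T 1) 1 (by omega),
      Matrix.diagonal_mul_diagonal, Matrix.diagonal_mul_diagonal]
    exact congrArg Matrix.diagonal (funext fun k => mul_comm _ _)
  have hg := hinj hcomm
  -- the representation ψ via the (unreduced) Burau matrices at t = -1
  have hrels : ∀ r ∈ sbRels n,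
      FreeGroup.lift (Sum.elim (SBnAux.MM (n := n)) (SBnAux.MM (n := n))) r = 1 := by
    intro r hr
    rcases hr with ⟨i,j,hij,rfl⟩ | ⟨i,j,hij,rfl⟩ | ⟨i,j,hij,rfl⟩ | ⟨i,j,hij,rfl⟩ |
      ⟨i,rfl⟩ | ⟨i,j,hij,rfl⟩ | ⟨i,j,hij,rfl⟩ <;>
      simp only [sbσ, sbτ, _root_.map_mul, _root_.map_inv, FreeGroup.lift_apply_of, Sum.elim_inl, Sum.elim_inr,
        mul_inv_eq_one]
    · exact SBnAux.MM_braid i j hij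
    · exact SBnAux.MM_comm i j hij
    · exact SBnAux.MM_comm i j hij
    · exact SBnAux.MM_comm i j hij
    · exact SBnAux.MM_braid i j hij
    · exact (SBnAux.MM_braid i j hij).symm
  let ψ : PresentedGroup (sbRels n) →* GL (Fin n) ℤ := PresentedGroup.toGroup hrels
  have hE := congrArg (fun u => ((ψ u : GL (Fin n) ℤ) : Matrix (Fin n) (Fin n) ℤ)) hg
  repeat erw [_root_.map_mul] at hE
  simp only [_root_.map_mul, Units.val_mul, PresentedGroup.toGroup.of, Sum.elim_inl, ψ,
    SBnAux.MM_val] at hE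
  -- now derive a numeric contradiction
  set x := SBnAux.AA (n := n) i0 with hxdef
  set y := SBnAux.AA (n := n) i1 with hydef
  have hx := SBnAux.AA_sq (n := n) i0
  have hy := SBnAux.AA_sq (n := n) i1
  have hx2 : (1-x)*(1-x) = 1-(x+x) := by
    have h : (1-x)*(1-x) = 1-(x+x)+x*x := by noncomm_ring
    rw [h, ← hxdef] at *; rw [hx, add_zero]
  have hy2 : (1-y)*(1-y) = 1-(y+y) := by
    have h : (1-y)*(1-y) = 1-(y+y)+y*y := by noncomm_ring
    rw [h, hy, add_zero]
  rw [hx2, hy2] at hE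
  have e1 : (1-(x+x))*(1-(y+y)) = (1-(x+x)-(y+y)) + (x*y+x*y+(x*y+x*y)) := by noncomm_ring
  have e2 : (1-(y+y))*(1-(x+x)) = (1-(x+x)-(y+y)) + (y*x+y*x+(y*x+y*x)) := by noncomm_ring
  rw [e1, e2] at hE
  have h4 := add_left_cancel hE
  -- identify x*y and y*x
  have hq : SBnAux.fe (n := n) i1 = SBnAux.fe1 (n := n) i0 := by
    simp [SBnAux.fe, SBnAux.fe1, Fin.ext_iff, hi0def, hi1def]
  have hne1 : SBnAux.fe (n := n) i0 ≠ SBnAux.fe1 (n := n) i0 := SBnAux.fe_ne_fe1 i0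
  have hne2 : SBnAux.fe (n := n) i0 ≠ SBnAux.fe1 (n := n) i1 := by
    simp [SBnAux.fe, SBnAux.fe1, Fin.ext_iff]
  have hne3 : SBnAux.fe1 (n := n) i0 ≠ SBnAux.fe1 (n := n) i1 := by
    simp [SBnAux.fe, SBnAux.fe1, Fin.ext_iff]
  have hxy : x*y = Matrix.vecMulVec (SBnAux.uv (SBnAux.fe i0) (SBnAux.fe1 i0))
      (SBnAux.rv (SBnAux.fe1 i0) (SBnAux.fe1 i1)) := by
    rw [hxdef, hydef, SBnAux.AA, SBnAux.AA, hq]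
    exact SBnAux.aa_adj _ _ _ hne1 hne2 hne3
  have hyx : y*x = -(Matrix.vecMulVec (SBnAux.uv (SBnAux.fe1 i0) (SBnAux.fe1 i1))
      (SBnAux.rv (SBnAux.fe i0) (SBnAux.fe1 i0))) := by
    rw [hxdef, hydef, SBnAux.AA, SBnAux.AA, hq]
    exact SBnAux.aa_adj' _ _ _ hne1 hne2 hne3
  rw [hxy, hyx] at h4
  have hval := congrFun (congrFun h4 (SBnAux.fe i0)) (SBnAux.fe1 i0)
  simp [Matrix.vecMulVec_apply, SBnAux.uv, SBnAux.rv, SBnAux.sing, Pi.single_apply,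
    Matrix.add_apply, Matrix.neg_apply, SBnAux.fe, SBnAux.fe1, Fin.ext_iff] at hval
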